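/- Let A be an invertible Hermitian N×N complex matrix, let m ≥ 1 be an integer and ε > 0. If there exists an index subset γ ⊆ {1,…,N} of cardinality 2m such that the principal submatrix A⁻¹[γ] is invertible and the Hermitian matrix (A⁻¹[γ])⁻¹ has at least m eigenvalues, counted with multiplicity, in the open interval (−ε, ε), then A has at least m eigenvalues, counted with multiplicity, in the open interval (−ε, ε). -/

import Mathlib

open Matrix

/-- Number of eigenvalues (with multiplicity) of a Hermitian matrix in the open
interval `(a, b)`. -/
noncomputable def eigCountIoo {n : Type*} [Fintype n] [DecidableEq n]
    (M : Matrix n n ℂ) (a b : ℝ) : ℕ :=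
  if hM : M.IsHermitian then Nat.card {i : n // hM.eigenvalues i ∈ Set.Ioo a b} else 0

/-- The principal submatrix of `M` with rows and columns indexed by `γ`. -/
def principalSub {N : ℕ} (M : Matrix (Fin N) (Fin N) ℂ) (γ : Finset (Fin N)) :
    Matrix γ γ ℂ :=
  M.submatrix (fun i => (i : Fin N)) (fun i => (i : Fin N))

section Stmt3Aux

open ComplexInnerProductSpace Module Submodule

variable {n : Type*} [Fintype n] [DecidableEq n]


noncomputable abbrev TE (M : Matrix n n ℂ) : EuclideanSpace ℂ n →ₗ[ℂ] EuclideanSpace ℂ n :=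
  Matrix.toEuclideanLin M

lemma TE_eigen (M : Matrix n n ℂ) (hM : M.IsHermitian) (i : n) :
    TE M (hM.eigenvectorBasis i) = (hM.eigenvalues i : ℂ) • hM.eigenvectorBasis i := by
  apply (WithLp.equiv 2 (n → ℂ)).injective
  rw [show (WithLp.equiv 2 (n → ℂ)) (TE M (hM.eigenvectorBasis i)) = M *ᵥ (WithLp.equiv 2 (n → ℂ)) (hM.eigenvectorBasis i) from rfl]
  rw [show (WithLp.equiv 2 (n → ℂ)) (hM.eigenvectorBasis i) = ⇑(hM.eigenvectorBasis i) from rfl]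
  rw [hM.mulVec_eigenvectorBasis]
  funext j
  simp [Complex.real_smul]

lemma repr_TE (M : Matrix n n ℂ) (v : OrthonormalBasis n ℂ (EuclideanSpace ℂ n))
    (ν : n → ℝ) (hv : ∀ i, TE M (v i) = (ν i : ℂ) • v i) (x : EuclideanSpace ℂ n) :
    TE M x = ∑ j, ((ν j : ℂ) * v.repr x j) • v j := by
  conv_lhs => rw [← v.sum_repr x, map_sum]
  refine Finset.sum_congr rfl fun j _ => ?_
  rw [_root_.map_smul, hv, smul_smul, mul_comm]

lemma inner_TE (M : Matrix n n ℂ) (v : OrthonormalBasis n ℂ (EuclideanSpace ℂ n))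
    (ν : n → ℝ) (hv : ∀ i, TE M (v i) = (ν i : ℂ) • v i) (x : EuclideanSpace ℂ n) :
    (⟪x, TE M x⟫ : ℂ).re = ∑ i, ν i * ‖v.repr x i‖ ^ 2 := by
  rw [repr_TE M v ν hv x, inner_sum, Complex.re_sum]
  refine Finset.sum_congr rfl fun i _ => ?_
  have hx : ⟪x, v i⟫ = (starRingEnd ℂ) (v.repr x i) := by
    rw [v.repr_apply_apply x i, inner_conj_symm]
  rw [inner_smul_right, hx, mul_assoc, Complex.mul_conj]
  simp [Complex.normSq_eq_norm_sq, ← Complex.ofReal_pow]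

lemma norm_sq_repr (v : OrthonormalBasis n ℂ (EuclideanSpace ℂ n)) (x : EuclideanSpace ℂ n) :
    ‖x‖ ^ 2 = ∑ i, ‖v.repr x i‖ ^ 2 := by
  rw [← v.repr.norm_map x, EuclideanSpace.norm_eq, Real.sq_sqrt]
  exact Finset.sum_nonneg fun i _ => sq_nonneg _

lemma exists_repr_ne_zero (v : OrthonormalBasis n ℂ (EuclideanSpace ℂ n))
    {x : EuclideanSpace ℂ n} (hx : x ≠ 0) : ∃ i, v.repr x i ≠ 0 := by
  by_contra hcon
  push_neg at hcon
  apply hx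
  have : v.repr x = 0 := by
    ext i; exact hcon i
  simpa using v.repr.map_eq_zero_iff.mp this

lemma bound_gt (M : Matrix n n ℂ) (v : OrthonormalBasis n ℂ (EuclideanSpace ℂ n))
    (ν : n → ℝ) (hv : ∀ i, TE M (v i) = (ν i : ℂ) • v i) (t : ℝ) (x : EuclideanSpace ℂ n)
    (hs : ∀ i, v.repr x i ≠ 0 → t < ν i) (hx : x ≠ 0) :
    t * ‖x‖ ^ 2 < (⟪x, TE M x⟫ : ℂ).re := by
  rw [inner_TE M v ν hv, norm_sq_repr v, Finset.mul_sum]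
  obtain ⟨i₀, hi₀⟩ := exists_repr_ne_zero v hx
  refine Finset.sum_lt_sum (fun i _ => ?_) ⟨i₀, Finset.mem_univ _, ?_⟩
  · by_cases hc : v.repr x i = 0
    · simp [hc]
    · exact le_of_lt (mul_lt_mul_of_pos_right (hs i hc) (pow_pos (norm_pos_iff.mpr hc) 2))
  · exact mul_lt_mul_of_pos_right (hs i₀ hi₀) (pow_pos (norm_pos_iff.mpr hi₀) 2)

lemma bound_lt (M : Matrix n n ℂ) (v : OrthonormalBasis n ℂ (EuclideanSpace ℂ n))
    (ν : n → ℝ) (hv : ∀ i, TE M (v i) = (ν i : ℂ) • v i) (t : ℝ) (x : EuclideanSpace ℂ n)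
    (hs : ∀ i, v.repr x i ≠ 0 → ν i < t) (hx : x ≠ 0) :
    (⟪x, TE M x⟫ : ℂ).re < t * ‖x‖ ^ 2 := by
  rw [inner_TE M v ν hv, norm_sq_repr v, Finset.mul_sum]
  obtain ⟨i₀, hi₀⟩ := exists_repr_ne_zero v hx
  refine Finset.sum_lt_sum (fun i _ => ?_) ⟨i₀, Finset.mem_univ _, ?_⟩
  · by_cases hc : v.repr x i = 0
    · simp [hc]
    · exact le_of_lt (mul_lt_mul_of_pos_right (hs i hc) (pow_pos (norm_pos_iff.mpr hc) 2))
  · exact mul_lt_mul_of_pos_right (hs i₀ hi₀) (pow_pos (norm_pos_iff.mpr hi₀) 2)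

lemma bound_le (M : Matrix n n ℂ) (v : OrthonormalBasis n ℂ (EuclideanSpace ℂ n))
    (ν : n → ℝ) (hv : ∀ i, TE M (v i) = (ν i : ℂ) • v i) (t : ℝ) (x : EuclideanSpace ℂ n)
    (hs : ∀ i, v.repr x i ≠ 0 → ν i ≤ t) :
    (⟪x, TE M x⟫ : ℂ).re ≤ t * ‖x‖ ^ 2 := by
  rw [inner_TE M v ν hv, norm_sq_repr v, Finset.mul_sum]
  refine Finset.sum_le_sum fun i _ => ?_
  by_cases hc : v.repr x i = 0
  · simp [hc]
  · exact mul_le_mul_of_nonneg_right (hs i hc) (by positivity)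

lemma bound_ge (M : Matrix n n ℂ) (v : OrthonormalBasis n ℂ (EuclideanSpace ℂ n))
    (ν : n → ℝ) (hv : ∀ i, TE M (v i) = (ν i : ℂ) • v i) (t : ℝ) (x : EuclideanSpace ℂ n)
    (hs : ∀ i, v.repr x i ≠ 0 → t ≤ ν i) :
    t * ‖x‖ ^ 2 ≤ (⟪x, TE M x⟫ : ℂ).re := by
  rw [inner_TE M v ν hv, norm_sq_repr v, Finset.mul_sum]
  refine Finset.sum_le_sum fun i _ => ?_
  by_cases hc : v.repr x i = 0
  · simp [hc]
  · exact mul_le_mul_of_nonneg_right (hs i hc) (by positivity)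

lemma mem_span_iff (v : OrthonormalBasis n ℂ (EuclideanSpace ℂ n)) (s : Set n)
    (x : EuclideanSpace ℂ n) :
    x ∈ Submodule.span ℂ (⇑v '' s) ↔ ∀ i ∉ s, v.repr x i = 0 := by
  rw [← v.coe_toBasis, Basis.mem_span_image]
  constructor
  · intro hsub i hi
    rw [← v.coe_toBasis_repr_apply]
    by_contra hne
    exact hi (hsub (Finsupp.mem_support_iff.mpr hne))
  · intro h i hi
    simp only [Finset.mem_coe, Finsupp.mem_support_iff] at hi
    by_contra hns
    exact hi (by rw [v.coe_toBasis_repr_apply]; exact h i hns)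

lemma finrank_span_image (v : OrthonormalBasis n ℂ (EuclideanSpace ℂ n)) (s : Finset n) :
    finrank ℂ (Submodule.span ℂ (⇑v '' ↑s)) = s.card := by
  have hli : LinearIndependent ℂ (fun i : ↥s => v ↑i) := by
    have := v.orthonormal.linearIndependent
    exact this.comp _ Subtype.val_injective
  have himg : ⇑v '' ↑s = Set.range (fun i : ↥s => v ↑i) := by
    ext y; simp [Set.mem_image]
  rw [himg, finrank_span_eq_card hli, Fintype.card_coe]

lemma exists_ne_zero_mem_inf {W U : Submodule ℂ (EuclideanSpace ℂ n)}
    (h : Fintype.card n < finrank ℂ W + finrank ℂ U) :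
    ∃ x : EuclideanSpace ℂ n, x ∈ W ∧ x ∈ U ∧ x ≠ 0 := by
  have hsum := Submodule.finrank_sup_add_finrank_inf_eq W U
  have hle : finrank ℂ ↥(W ⊔ U) ≤ Fintype.card n := by
    have := Submodule.finrank_le (W ⊔ U)
    rwa [finrank_euclideanSpace] at this
  have hpos : 0 < finrank ℂ ↥(W ⊓ U) := by omega
  obtain ⟨⟨x, hx⟩, hne⟩ := Module.finrank_pos_iff_exists_ne_zero.mp hpos
  exact ⟨x, hx.1, hx.2, fun h0 => hne (Subtype.ext h0)⟩

lemma count_ge_of_subspace (M : Matrix n n ℂ) (hM : M.IsHermitian) (t : ℝ)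
    (W : Submodule ℂ (EuclideanSpace ℂ n))
    (hW : ∀ x ∈ W, x ≠ 0 → t * ‖x‖ ^ 2 < (⟪x, TE M x⟫ : ℂ).re) :
    finrank ℂ W ≤ Fintype.card {i // t < hM.eigenvalues i} := by
  by_contra hc
  push_neg at hc
  set v := hM.eigenvectorBasis with hv
  set s : Finset n := Finset.univ.filter (fun i => ¬ t < hM.eigenvalues i) with hs
  set U := Submodule.span ℂ (⇑v '' ↑s) with hU
  have hUrank : finrank ℂ U = s.card := finrank_span_image v s
  have hcard : Fintype.card {i // t < hM.eigenvalues i} + s.card = Fintype.card n := by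
    rw [Fintype.card_subtype]
    rw [hs, ← Finset.card_union_of_disjoint (Finset.disjoint_filter_filter_not _ _ _)]
    rw [Finset.filter_union_filter_not_eq]
    exact Finset.card_univ
  obtain ⟨x, hxW, hxU, hxne⟩ := exists_ne_zero_mem_inf (W := W) (U := U) (by omega)
  have h1 := hW x hxW hxne
  have h2 : (⟪x, TE M x⟫ : ℂ).re ≤ t * ‖x‖ ^ 2 := by
    refine bound_le M v hM.eigenvalues (TE_eigen M hM) t x fun i hrepr => ?_
    have := (mem_span_iff v (↑s) x).mp hxU i
    by_contra hgt
    push_neg at hgt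
    exact hrepr (this (by simp [hs, hgt]))
  linarith

lemma count_ge_of_subspace' (M : Matrix n n ℂ) (hM : M.IsHermitian) (t : ℝ)
    (W : Submodule ℂ (EuclideanSpace ℂ n))
    (hW : ∀ x ∈ W, x ≠ 0 → (⟪x, TE M x⟫ : ℂ).re < t * ‖x‖ ^ 2) :
    finrank ℂ W ≤ Fintype.card {i // hM.eigenvalues i < t} := by
  by_contra hc
  push_neg at hc
  set v := hM.eigenvectorBasis with hv
  set s : Finset n := Finset.univ.filter (fun i => ¬ hM.eigenvalues i < t) with hs
  set U := Submodule.span ℂ (⇑v '' ↑s) with hU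
  have hUrank : finrank ℂ U = s.card := finrank_span_image v s
  have hcard : Fintype.card {i // hM.eigenvalues i < t} + s.card = Fintype.card n := by
    rw [Fintype.card_subtype]
    rw [hs, ← Finset.card_union_of_disjoint (Finset.disjoint_filter_filter_not _ _ _)]
    rw [Finset.filter_union_filter_not_eq]
    exact Finset.card_univ
  obtain ⟨x, hxW, hxU, hxne⟩ := exists_ne_zero_mem_inf (W := W) (U := U) (by omega)
  have h1 := hW x hxW hxne
  have h2 : t * ‖x‖ ^ 2 ≤ (⟪x, TE M x⟫ : ℂ).re := by
    refine bound_ge M v hM.eigenvalues (TE_eigen M hM) t x fun i hrepr => ?_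
    have := (mem_span_iff v (↑s) x).mp hxU i
    by_contra hgt
    push_neg at hgt
    exact hrepr (this (by simp [hs, hgt]))
  linarith

lemma eigvec_mem_span (M : Matrix n n ℂ) (hM : M.IsHermitian) (s : Set ℝ)
    (w : EuclideanSpace ℂ n) (lam : ℝ) (hw : TE M w = (lam : ℂ) • w) (hlam : lam ∈ s) :
    w ∈ Submodule.span ℂ (⇑hM.eigenvectorBasis '' {i | hM.eigenvalues i ∈ s}) := by
  rw [mem_span_iff]
  intro i hi
  set v := hM.eigenvectorBasis
  have h1 : ⟪v i, TE M w⟫ = (lam : ℂ) * ⟪v i, w⟫ := by rw [hw, inner_smul_right]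
  have h2 : ⟪v i, TE M w⟫ = (hM.eigenvalues i : ℂ) * ⟪v i, w⟫ := by
    rw [← (Matrix.isHermitian_iff_isSymmetric.mp hM (v i) w), TE_eigen M hM i,
      inner_smul_left, Complex.conj_ofReal]
  have hne : (hM.eigenvalues i : ℂ) ≠ (lam : ℂ) := by
    simpa using fun hh => hi (by simpa [hh] using hlam)
  have : (hM.eigenvalues i - lam : ℂ) * ⟪v i, w⟫ = 0 := by
    rw [sub_mul, ← h2, h1]; ring
  rcases mul_eq_zero.mp this with h | h
  · exact absurd (by linear_combination h) hne
  · rw [v.repr_apply_apply]; exact h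

lemma count_ge_of_orthonormal_eigvecs (M : Matrix n n ℂ) (hM : M.IsHermitian) (a b : ℝ)
    {ι : Type*} [Fintype ι] (w : ι → EuclideanSpace ℂ n) (hw : Orthonormal ℂ w)
    (lam : ι → ℝ) (hl : ∀ j, lam j ∈ Set.Ioo a b)
    (he : ∀ j, TE M (w j) = (lam j : ℂ) • w j) :
    Fintype.card ι ≤ Fintype.card {i // hM.eigenvalues i ∈ Set.Ioo a b} := by
  set v := hM.eigenvectorBasis
  set sF : Finset n := Finset.univ.filter (fun i => hM.eigenvalues i ∈ Set.Ioo a b) with hsF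
  have hset : {i | hM.eigenvalues i ∈ Set.Ioo a b} = (↑sF : Set n) := by
    ext i; simp [hsF]
  have h1 : ∀ j, w j ∈ Submodule.span ℂ (⇑v '' ↑sF) := by
    intro j
    rw [← hset]
    exact eigvec_mem_span M hM _ (w j) (lam j) (he j) (hl j)
  have h2 : Submodule.span ℂ (Set.range w) ≤ Submodule.span ℂ (⇑v '' ↑sF) :=
    Submodule.span_le.mpr (by rintro _ ⟨j, rfl⟩; exact h1 j)
  calc Fintype.card ι = finrank ℂ (Submodule.span ℂ (Set.range w)) :=
        (finrank_span_eq_card hw.linearIndependent).symm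
    _ ≤ finrank ℂ (Submodule.span ℂ (⇑v '' ↑sF)) := Submodule.finrank_mono h2
    _ = sF.card := finrank_span_image v sF
    _ = Fintype.card {i // hM.eigenvalues i ∈ Set.Ioo a b} := (Fintype.card_subtype _).symm

lemma eigenvalues_ne_zero (M : Matrix n n ℂ) (hM : M.IsHermitian) (hU : IsUnit M) (i : n) :
    hM.eigenvalues i ≠ 0 := by
  have hdet : M.det ≠ 0 := by
    have := (Matrix.isUnit_iff_isUnit_det M).mp hU
    exact IsUnit.ne_zero this
  rw [hM.det_eq_prod_eigenvalues] at hdet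
  intro h0
  exact hdet (Finset.prod_eq_zero (Finset.mem_univ i) (by rw [h0]; norm_num))

lemma TE_inv_eigen (M : Matrix n n ℂ) (hM : M.IsHermitian) (hU : IsUnit M) (i : n) :
    TE M⁻¹ (hM.eigenvectorBasis i)
      = ((hM.eigenvalues i : ℂ))⁻¹ • hM.eigenvectorBasis i := by
  have hμ : (hM.eigenvalues i : ℂ) ≠ 0 := by
    exact_mod_cast eigenvalues_ne_zero M hM hU i
  have hdet : IsUnit M.det := (Matrix.isUnit_iff_isUnit_det M).mp hU
  have key : TE M⁻¹ (TE M (hM.eigenvectorBasis i)) = hM.eigenvectorBasis i := by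
    apply (WithLp.equiv 2 (n → ℂ)).injective
    show M⁻¹ *ᵥ (M *ᵥ (WithLp.equiv 2 (n → ℂ)) (hM.eigenvectorBasis i)) = _
    rw [Matrix.mulVec_mulVec, Matrix.nonsing_inv_mul M hdet, Matrix.one_mulVec]
  rw [TE_eigen M hM i, _root_.map_smul] at key
  calc TE M⁻¹ (hM.eigenvectorBasis i)
      = ((hM.eigenvalues i : ℂ))⁻¹ • ((hM.eigenvalues i : ℂ) • TE M⁻¹ (hM.eigenvectorBasis i)) := by
        rw [smul_smul, inv_mul_cancel₀ hμ, one_smul]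
    _ = ((hM.eigenvalues i : ℂ))⁻¹ • hM.eigenvectorBasis i := by rw [key]

section Ext

variable {N : ℕ} (γ : Finset (Fin N))

def extFun (y : ↥γ → ℂ) : Fin N → ℂ :=
  fun j => if h : j ∈ γ then y ⟨j, h⟩ else 0

lemma extFun_coe (y : ↥γ → ℂ) (i : ↥γ) : extFun γ y ↑i = y i := by
  simp [extFun, i.2]

noncomputable def extL : EuclideanSpace ℂ ↥γ →ₗ[ℂ] EuclideanSpace ℂ (Fin N) where
  toFun y := (WithLp.equiv 2 _).symm (extFun γ ((WithLp.equiv 2 _) y))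
  map_add' x y := by
    ext j
    by_cases h : j ∈ γ <;>
      simp [extFun, h, PiLp.add_apply]
  map_smul' c x := by
    ext j
    by_cases h : j ∈ γ <;>
      simp [extFun, h, PiLp.smul_apply,
        smul_eq_mul]

lemma dot_ext (u w : ↥γ → ℂ) : star (extFun γ u) ⬝ᵥ extFun γ w = star u ⬝ᵥ w := by
  unfold dotProduct
  rw [← Finset.sum_subset (Finset.subset_univ γ) (by
    intro j _ hj
    simp [extFun, hj])]
  rw [← Finset.sum_attach γ (fun j => (star (extFun γ u)) j * extFun γ w j)]
  refine Finset.sum_congr rfl fun i _ => ?_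
  simp [extFun_coe, Pi.star_apply]

lemma extL_inner (y z : EuclideanSpace ℂ ↥γ) : ⟪extL γ y, extL γ z⟫ = (⟪y, z⟫ : ℂ) := by
  rw [EuclideanSpace.inner_eq_star_dotProduct, EuclideanSpace.inner_eq_star_dotProduct]
  rw [dotProduct_comm, dotProduct_comm z.ofLp]
  exact dot_ext γ _ _

lemma extL_norm (y : EuclideanSpace ℂ ↥γ) : ‖extL γ y‖ = ‖y‖ := by
  have h1 : ‖extL γ y‖ ^ 2 = ‖y‖ ^ 2 := by
    rw [← @inner_self_eq_norm_sq ℂ, ← @inner_self_eq_norm_sq ℂ, ← extL_inner γ y y]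
  have h2 : (0:ℝ) ≤ ‖extL γ y‖ := norm_nonneg _
  have h3 : (0:ℝ) ≤ ‖y‖ := norm_nonneg _
  nlinarith

lemma extL_injective : Function.Injective (extL γ) := by
  intro y z h
  apply (WithLp.equiv 2 (↥γ → ℂ)).injective
  funext i
  have := congrFun (congrArg (WithLp.equiv 2 (Fin N → ℂ)) h) ↑i
  simpa [extL, extFun_coe] using this

lemma extL_form (M : Matrix (Fin N) (Fin N) ℂ) (y : EuclideanSpace ℂ ↥γ) :
    ⟪extL γ y, TE M (extL γ y)⟫
      = (⟪y, TE (M.submatrix ((↑) : ↥γ → Fin N) ((↑) : ↥γ → Fin N)) y⟫ : ℂ) := by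
  rw [EuclideanSpace.inner_eq_star_dotProduct, EuclideanSpace.inner_eq_star_dotProduct]
  show (M *ᵥ extFun γ y) ⬝ᵥ star (extFun γ y)
      = ((M.submatrix ((↑) : ↥γ → Fin N) ((↑) : ↥γ → Fin N)) *ᵥ (y : ↥γ → ℂ)) ⬝ᵥ star (y : ↥γ → ℂ)
  rw [dotProduct_comm, dotProduct_comm ((M.submatrix ((↑) : ↥γ → Fin N) ((↑) : ↥γ → Fin N)) *ᵥ (y : ↥γ → ℂ))]
  unfold dotProduct
  rw [← Finset.sum_subset (Finset.subset_univ γ) (by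
    intro j _ hj
    simp [extFun, hj])]
  rw [← Finset.sum_attach γ (fun j => (star (extFun γ y)) j * (M *ᵥ extFun γ y) j)]
  refine Finset.sum_congr rfl fun i _ => ?_
  simp only [Pi.star_apply, extFun_coe]
  congr 1
  show (M *ᵥ extFun γ y) ↑i = _
  unfold Matrix.mulVec dotProduct
  rw [← Finset.sum_subset (Finset.subset_univ γ) (by
    intro j _ hj
    simp [extFun, hj])]
  rw [← Finset.sum_attach γ (fun j => M ↑i j * extFun γ y j)]
  refine Finset.sum_congr rfl fun j _ => ?_
  simp [extFun_coe, Matrix.submatrix]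

end Ext

open Module


theorem stmt3 {N : ℕ} (A : Matrix (Fin N) (Fin N) ℂ) (hA : A.IsHermitian)
    (hInv : IsUnit A) (m : ℕ) (hm : 1 ≤ m) (ε : ℝ) (hε : 0 < ε)
    (h : ∃ γ : Finset (Fin N), γ.card = 2 * m ∧ IsUnit (principalSub A⁻¹ γ) ∧
      m ≤ eigCountIoo ((principalSub A⁻¹ γ)⁻¹) (-ε) ε) :
    m ≤ eigCountIoo A (-ε) ε := by
  classical
  obtain ⟨γ, hγcard, hBunit, hcount⟩ := h
  have hεinv : (0:ℝ) < ε⁻¹ := by positivity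
  set B : Matrix ↥γ ↥γ ℂ := principalSub A⁻¹ γ with hBdef
  have hAinvH : (A⁻¹).IsHermitian := hA.inv
  have hBH : B.IsHermitian := hAinvH.submatrix _
  have hCH : (B⁻¹).IsHermitian := hBH.inv
  rw [eigCountIoo, dif_pos hCH, Nat.card_eq_fintype_card] at hcount
  rw [eigCountIoo, dif_pos hA, Nat.card_eq_fintype_card]
  set μC := hCH.eigenvalues with hμCdef
  set vC := hCH.eigenvectorBasis with hvCdef
  have hdetA : IsUnit A.det := (Matrix.isUnit_iff_isUnit_det A).mp hInv
  have hdetB : IsUnit B.det := (Matrix.isUnit_iff_isUnit_det B).mp hBunit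
  have hCunit : IsUnit (B⁻¹) := by
    rw [Matrix.isUnit_iff_isUnit_det, Matrix.det_nonsing_inv, Ring.inverse_eq_inv,
      isUnit_iff_ne_zero]
    exact inv_ne_zero hdetB.ne_zero
  have hAinvUnit : IsUnit (A⁻¹) := by
    rw [Matrix.isUnit_iff_isUnit_det, Matrix.det_nonsing_inv, Ring.inverse_eq_inv,
      isUnit_iff_ne_zero]
    exact inv_ne_zero hdetA.ne_zero
  have hμC : ∀ i, μC i ≠ 0 := eigenvalues_ne_zero _ hCH hCunit
  -- the action of B on the eigenbasis of B⁻¹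
  have hBact : ∀ i, TE B (vC i) = (((μC i)⁻¹ : ℝ) : ℂ) • vC i := by
    intro i
    have := TE_inv_eigen (B⁻¹) hCH hCunit i
    rw [Matrix.nonsing_inv_nonsing_inv B hdetB] at this
    rw [this]
    norm_cast
  set ν := hAinvH.eigenvalues with hνdef
  -- the action of A on the eigenbasis of A⁻¹
  have hAact : ∀ i, TE A (hAinvH.eigenvectorBasis i) = (((ν i)⁻¹ : ℝ) : ℂ) • hAinvH.eigenvectorBasis i := by
    intro i
    have := TE_inv_eigen (A⁻¹) hAinvH hAinvUnit i
    rw [Matrix.nonsing_inv_nonsing_inv A hdetA] at this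
    rw [this]
    norm_cast
  have hν : ∀ i, ν i ≠ 0 := eigenvalues_ne_zero _ hAinvH hAinvUnit
  -- split the count of B⁻¹-eigenvalues
  set pS : Finset ↥γ := Finset.univ.filter (fun i => μC i ∈ Set.Ioo 0 ε) with hpS
  set qS : Finset ↥γ := Finset.univ.filter (fun i => μC i ∈ Set.Ioo (-ε) 0) with hqS
  have hpq : Fintype.card {i // μC i ∈ Set.Ioo (-ε) ε} ≤ pS.card + qS.card := by
    rw [Fintype.card_subtype]
    refine le_trans (Finset.card_le_card ?_) (Finset.card_union_le pS qS)
    intro i hi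
    simp only [Finset.mem_filter, Finset.mem_univ, true_and, Set.mem_Ioo] at hi
    rcases (hμC i).lt_or_gt with hlt | hgt
    · exact Finset.mem_union_right _ (by simp [hqS, Set.mem_Ioo, hi.1, hlt])
    · exact Finset.mem_union_left _ (by simp [hpS, Set.mem_Ioo, hi.2, hgt])
  -- positive side
  have hp : pS.card ≤ Fintype.card {i // ε⁻¹ < ν i} := by
    set W0 := Submodule.span ℂ (⇑vC '' ↑pS) with hW0
    set W := Submodule.map (extL γ) W0 with hW
    have hrank : finrank ℂ W = pS.card := by
      rw [hW, ← finrank_span_image vC pS, ← hW0]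
      exact (LinearEquiv.finrank_eq
        (Submodule.equivMapOfInjective (extL γ) (extL_injective γ) W0)).symm
    rw [← hrank]
    refine count_ge_of_subspace (A⁻¹) hAinvH ε⁻¹ W ?_
    rintro x ⟨y, hy, rfl⟩ hne
    have hyne : y ≠ 0 := fun h0 => hne (by rw [h0, map_zero])
    have hform : (⟪extL γ y, TE (A⁻¹) (extL γ y)⟫ : ℂ) = ⟪y, TE B y⟫ := extL_form γ (A⁻¹) y
    rw [hform, extL_norm]
    refine bound_gt B vC (fun i => (μC i)⁻¹) hBact ε⁻¹ y ?_ hyne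
    intro i hrepr
    have hmem : i ∈ pS := by
      by_contra hns
      exact hrepr ((mem_span_iff vC (↑pS) y).mp hy i (by simpa using hns))
    rw [hpS] at hmem
    simp only [Finset.mem_filter, Finset.mem_univ, true_and, Set.mem_Ioo] at hmem
    exact (inv_lt_inv₀ hε hmem.1).mpr hmem.2
  -- negative side
  have hq : qS.card ≤ Fintype.card {i // ν i < -ε⁻¹} := by
    set W0 := Submodule.span ℂ (⇑vC '' ↑qS) with hW0
    set W := Submodule.map (extL γ) W0 with hW
    have hrank : finrank ℂ W = qS.card := by
      rw [hW, ← finrank_span_image vC qS, ← hW0]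
      exact (LinearEquiv.finrank_eq
        (Submodule.equivMapOfInjective (extL γ) (extL_injective γ) W0)).symm
    rw [← hrank]
    refine count_ge_of_subspace' (A⁻¹) hAinvH (-ε⁻¹) W ?_
    rintro x ⟨y, hy, rfl⟩ hne
    have hyne : y ≠ 0 := fun h0 => hne (by rw [h0, map_zero])
    have hform : (⟪extL γ y, TE (A⁻¹) (extL γ y)⟫ : ℂ) = ⟪y, TE B y⟫ := extL_form γ (A⁻¹) y
    rw [hform, extL_norm]
    refine bound_lt B vC (fun i => (μC i)⁻¹) hBact (-ε⁻¹) y ?_ hyne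
    intro i hrepr
    have hmem : i ∈ qS := by
      by_contra hns
      exact hrepr ((mem_span_iff vC (↑qS) y).mp hy i (by simpa using hns))
    rw [hqS] at hmem
    simp only [Finset.mem_filter, Finset.mem_univ, true_and, Set.mem_Ioo] at hmem
    have h1 : μC i < 0 := hmem.2
    have h2 : -ε < μC i := hmem.1
    have h3 : μC i * (μC i)⁻¹ = 1 := mul_inv_cancel₀ (hμC i)
    have h4 : ε * ε⁻¹ = 1 := mul_inv_cancel₀ hε.ne'
    nlinarith [mul_pos (neg_pos.mpr h1) hε]
  -- combine counts on A⁻¹ side into one orthonormal family for A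
  have hdisj : Disjoint (Finset.univ.filter (fun i => ε⁻¹ < ν i))
      (Finset.univ.filter (fun i => ν i < -ε⁻¹)) := by
    rw [Finset.disjoint_filter]
    intro i _ h1 h2
    linarith
  have hcardT : Fintype.card {i // ε⁻¹ < ν i} + Fintype.card {i // ν i < -ε⁻¹}
      = Fintype.card {i // ε⁻¹ < ν i ∨ ν i < -ε⁻¹} := by
    rw [Fintype.card_subtype, Fintype.card_subtype, Fintype.card_subtype,
      Finset.filter_or, Finset.card_union_of_disjoint hdisj]
  have hfinal : Fintype.card {i // ε⁻¹ < ν i ∨ ν i < -ε⁻¹}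
      ≤ Fintype.card {i // hA.eigenvalues i ∈ Set.Ioo (-ε) ε} := by
    refine count_ge_of_orthonormal_eigvecs A hA (-ε) ε
      (fun j : {i // ε⁻¹ < ν i ∨ ν i < -ε⁻¹} => hAinvH.eigenvectorBasis ↑j)
      (hAinvH.eigenvectorBasis.orthonormal.comp _ Subtype.val_injective)
      (fun j => (ν ↑j)⁻¹) ?_ (fun j => hAact ↑j)
    rintro ⟨j, hj | hj⟩
    · have hν0 : 0 < ν j := lt_trans hεinv hj
      constructor
      · have : (0:ℝ) < (ν j)⁻¹ := by positivity
        linarith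
      · calc (ν j)⁻¹ < (ε⁻¹)⁻¹ := inv_strictAnti₀ hεinv hj
          _ = ε := inv_inv ε
    · have hν0 : ν j < 0 := lt_trans hj (by linarith)
      have h3 : ν j * (ν j)⁻¹ = 1 := mul_inv_cancel₀ (hν j)
      have h4 : ε * ε⁻¹ = 1 := mul_inv_cancel₀ hε.ne'
      constructor
      · nlinarith [mul_pos (neg_pos.mpr hν0) hε]
      · have : (ν j)⁻¹ < 0 := inv_neg''.mpr hν0
        linarith
  omega

end Stmt3Aux
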